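/- Let h ∈ SO_{2n+1}(O_F) be an affine generic element of the pro-unipotent Iwahori radical. Then h has an eigenvector v with eigenvalue 1 which can be normalized so that v ∈ O^{2n+1}, v_1 = 1, and v_2 ≡ ⋯ ≡ v_{2n+1} ≡ 0 mod p. -/

import Mathlib

/-- Let O be the ring of integers of a p-adic field with odd residue
characteristic (modeled by a DVR R with 2 ∉ 𝔪), with uniformizer ϖ. Let
h ∈ SO_{2n+1}(O) (for the antidiagonal form J with (i, 2n+2-i)-entry
(-1)^{i+1}) be an affine generic element of the pro-unipotent Iwahori radical:
diagonal entries ≡ 1 mod 𝔪, below-diagonal entries in 𝔪, superdiagonal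
entries h_{1,2}, …, h_{n,n+1} not in 𝔪, and h_{2n,1} = ϖ·(unit). Then h has
an eigenvector v with eigenvalue 1, normalized so that v ∈ O^{2n+1}, v₁ = 1,
and v₂ ≡ ⋯ ≡ v_{2n+1} ≡ 0 mod 𝔪. -/
theorem stmt13 {R : Type*} [CommRing R] [IsDomain R] [IsDiscreteValuationRing R]
    {n : ℕ} (hn : 0 < n) (π : R) (hπ : Irreducible π)
    (h2 : (2 : R) ∉ IsLocalRing.maximalIdeal R)
    (J h : Matrix (Fin (2 * n + 1)) (Fin (2 * n + 1)) R)
    (hJ : J = Matrix.of fun (i j : Fin (2 * n + 1)) =>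
      if (i : ℕ) + (j : ℕ) = 2 * n then (-1 : R) ^ (i : ℕ) else 0)
    (hSO : h.transpose * J * h = J) (hdet : h.det = 1)
    (hdiag : ∀ i, h i i - 1 ∈ IsLocalRing.maximalIdeal R)
    (hlow : ∀ i j : Fin (2 * n + 1), (j : ℕ) < (i : ℕ) → h i j ∈ IsLocalRing.maximalIdeal R)
    (hgen1 : ∀ i j : Fin (2 * n + 1), (i : ℕ) < n → (i : ℕ) + 1 = (j : ℕ) →
      h i j ∉ IsLocalRing.maximalIdeal R)
    (hgen2 : ∃ w : R, IsUnit w ∧ h ⟨2 * n - 1, by omega⟩ ⟨0, by omega⟩ = π * w) :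
    ∃ v : Fin (2 * n + 1) → R, h.mulVec v = v ∧ v 0 = 1 ∧
      ∀ i : Fin (2 * n + 1), i ≠ 0 → v i ∈ IsLocalRing.maximalIdeal R := by
  classical
  -- Step A : J * J = 1, hence J.det is a unit
  have hJJ : J * J = 1 := by
    rw [hJ]
    ext i j
    have hi := i.isLt
    have hj := j.isLt
    rw [Matrix.mul_apply]
    rw [Finset.sum_eq_single (⟨2 * n - (i : ℕ), by omega⟩ : Fin (2 * n + 1))]
    · simp only [Matrix.of_apply]
      rw [if_pos (by omega)]
      by_cases hij : i = j
      · subst hij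
        rw [if_pos (by omega), Matrix.one_apply_eq, ← pow_add]
        have he : (i : ℕ) + (2 * n - (i : ℕ)) = 2 * n := by omega
        rw [he]
        simp [pow_mul]
      · rw [if_neg (by
          intro hc
          exact hij (Fin.ext (by omega))), Matrix.one_apply_ne hij, mul_zero]
    · intro b _ hb
      simp only [Matrix.of_apply]
      rw [if_neg (by
        intro hc
        exact hb (Fin.ext (by simp only [Fin.val_mk]; omega))), zero_mul]
    · intro hmem; exact absurd (Finset.mem_univ _) hmem
  -- Step B : det (h - 1) = 0, using that h is odd special orthogonal and 2 is a unit
  have hdet1 : (h - 1).det = 0 := by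
    have key : h.transpose * J * (h - 1) = -((h - 1).transpose * J) := by
      rw [Matrix.mul_sub, Matrix.mul_one, hSO, Matrix.transpose_sub, Matrix.sub_mul,
        Matrix.transpose_one, Matrix.one_mul, neg_sub]
    have hd := congrArg Matrix.det key
    rw [Matrix.det_mul, Matrix.det_mul, Matrix.det_transpose, hdet, one_mul, Matrix.det_neg,
      Matrix.det_mul, Matrix.det_transpose, Fintype.card_fin] at hd
    have hodd : (-1 : R) ^ (2 * n + 1) = -1 := Odd.neg_one_pow ⟨n, by ring⟩
    rw [hodd] at hd
    have hJu : IsUnit J.det :=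
      IsUnit.of_mul_eq_one _ (by rw [← Matrix.det_mul, hJJ, Matrix.det_one])
    have h2u : IsUnit (2 : R) := IsLocalRing.notMem_maximalIdeal.mp h2
    have hz : (2 : R) * (J.det * (h - 1).det) = 0 := by linear_combination hd
    rcases mul_eq_zero.mp hz with hc | hc
    · exact absurd hc h2u.ne_zero
    · rcases mul_eq_zero.mp hc with hc2 | hc2
      · exact absurd hc2 hJu.ne_zero
      · exact hc2
  -- Step C : a nonzero kernel vector of h - 1 over R
  obtain ⟨w, hw0, hww⟩ := Matrix.exists_mulVec_eq_zero_iff.mpr hdet1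
  -- Step D : make it primitive (some coordinate a unit), using that R is a PID
  obtain ⟨d, hd⟩ := (IsPrincipalIdealRing.principal (Ideal.span (Set.range w))).principal
  have hdvd : ∀ i, d ∣ w i := by
    intro i
    have hmem : w i ∈ Ideal.span (Set.range w) := Ideal.subset_span (Set.mem_range_self i)
    rw [hd] at hmem
    exact Ideal.mem_span_singleton.mp hmem
  choose u hu using hdvd
  have hd0 : d ≠ 0 := by
    obtain ⟨i, hi⟩ := Function.ne_iff.mp hw0
    intro hc
    exact hi (by rw [hu i, hc, zero_mul]; rfl)
  have hone : ∃ c : Fin (2 * n + 1) → R, ∑ i, c i * u i = 1 := by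
    have hdmem : d ∈ Ideal.span (Set.range w) := by
      rw [hd]; exact Ideal.mem_span_singleton_self d
    obtain ⟨c, hc⟩ := Ideal.mem_span_range_iff_exists_fun.mp hdmem
    refine ⟨c, ?_⟩
    have hcalc : d * (∑ i, c i * u i) = d * 1 :=
      calc d * (∑ i, c i * u i) = ∑ i, c i * w i := by
            rw [Finset.mul_sum]; exact Finset.sum_congr rfl fun i _ => by rw [hu i]; ring
        _ = d * 1 := by rw [hc, mul_one]
    exact mul_left_cancel₀ hd0 hcalc
  have hexu : ∃ i, u i ∉ IsLocalRing.maximalIdeal R := by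
    by_contra hc
    push_neg at hc
    obtain ⟨c, hc1⟩ := hone
    have hone' : (1 : R) ∈ IsLocalRing.maximalIdeal R := by
      rw [← hc1]
      exact Ideal.sum_mem _ fun i _ => Ideal.mul_mem_left _ _ (hc i)
    exact (IsLocalRing.maximalIdeal.isMaximal R).ne_top
      (Ideal.eq_top_of_isUnit_mem _ hone' isUnit_one)
  have heig : h.mulVec u = u := by
    have huv : (h - 1).mulVec u = 0 := by
      have hw : w = d • u := funext fun i => by rw [Pi.smul_apply, smul_eq_mul, hu i]
      rw [hw, Matrix.mulVec_smul] at hww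
      funext i
      have hzz := congrFun hww i
      simp only [Pi.smul_apply, smul_eq_mul, Pi.zero_apply] at hzz
      rcases mul_eq_zero.mp hzz with hc | hc
      · exact absurd hc hd0
      · exact hc
    rwa [Matrix.sub_mulVec, Matrix.one_mulVec, sub_eq_zero] at huv
  -- Step E : residue field analysis of u
  set φ := IsLocalRing.residue R with hφ
  have hA0 : ∀ i j : Fin (2 * n + 1), (j : ℕ) < (i : ℕ) → φ (h i j) = 0 :=
    fun i j hlt => (IsLocalRing.residue_eq_zero_iff _).mpr (hlow i j hlt)
  have hA1 : ∀ i, φ (h i i) = 1 := by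
    intro i
    have h1 : φ (h i i - 1) = 0 := (IsLocalRing.residue_eq_zero_iff _).mpr (hdiag i)
    rw [map_sub, map_one, sub_eq_zero] at h1
    exact h1
  have hAgen : ∀ i j : Fin (2 * n + 1), (i : ℕ) < n → (i : ℕ) + 1 = (j : ℕ) →
      φ (h i j) ≠ 0 := by
    intro i j h1 h2' hc
    exact hgen1 i j h1 h2' ((IsLocalRing.residue_eq_zero_iff _).mp hc)
  have hrow : ∀ i : Fin (2 * n + 1), ∑ l, φ (h i l) * φ (u l) = φ (u i) := by
    intro i
    have h1 : ∑ l, h i l * u l = u i := by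
      simpa [Matrix.mulVec, dotProduct] using congrFun heig i
    calc ∑ l, φ (h i l) * φ (u l) = φ (∑ l, h i l * u l) := by
          rw [map_sum]; exact Finset.sum_congr rfl fun l _ => (map_mul φ _ _).symm
      _ = φ (u i) := by rw [h1]
  have hJv : ∀ i j : Fin (2 * n + 1), (i : ℕ) + (j : ℕ) = 2 * n →
      J.mulVec u i = (-1 : R) ^ (i : ℕ) * u j := by
    intro i j hij
    rw [hJ]
    simp only [Matrix.mulVec, dotProduct, Matrix.of_apply]
    rw [Finset.sum_eq_single j]
    · rw [if_pos hij]
    · intro b _ hb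
      rw [if_neg (fun hc => hb (Fin.ext (by omega))), zero_mul]
    · intro hmem; exact absurd (Finset.mem_univ _) hmem
  have hleft : h.transpose.mulVec (J.mulVec u) = J.mulVec u := by
    calc h.transpose.mulVec (J.mulVec u)
        = h.transpose.mulVec (J.mulVec (h.mulVec u)) := by rw [heig]
      _ = (h.transpose * J * h).mulVec u := by
          rw [Matrix.mulVec_mulVec, Matrix.mulVec_mulVec]
      _ = J.mulVec u := by rw [hSO]
  have hcol : ∀ i : Fin (2 * n + 1),
      ∑ l, φ (h l i) * φ (J.mulVec u l) = φ (J.mulVec u i) := by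
    intro i
    have h1 : ∑ l, h l i * J.mulVec u l = J.mulVec u i := by
      simpa [Matrix.mulVec, dotProduct, Matrix.transpose_apply] using congrFun hleft i
    calc ∑ l, φ (h l i) * φ (J.mulVec u l) = φ (∑ l, h l i * J.mulVec u l) := by
          rw [map_sum]; exact Finset.sum_congr rfl fun l _ => (map_mul φ _ _).symm
      _ = _ := by rw [h1]
  -- Claim 1 : φ (u j) = 0 for j > n (uses the left-eigenvector property via J)
  have claim1 : ∀ k : ℕ, ∀ j : Fin (2 * n + 1), 2 * n - (j : ℕ) ≤ k → n < (j : ℕ) →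
      φ (u j) = 0 := by
    intro k
    induction k using Nat.strong_induction_on with
    | _ k IH =>
      intro j hk hjn
      have hj2n := j.isLt
      set i : ℕ := 2 * n - (j : ℕ) with hidef
      have hin : i < n := by omega
      set i0 : Fin (2 * n + 1) := ⟨i, by omega⟩ with hi0
      set i1 : Fin (2 * n + 1) := ⟨i + 1, by omega⟩ with hi1
      have heq := hcol i1
      rw [Finset.sum_eq_add_of_mem i0 i1 (Finset.mem_univ _) (Finset.mem_univ _)
        (by intro hc; exact absurd (congrArg Fin.val hc) (by simp [hi0, hi1]))
        ?side] at heq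
      case side =>
        intro c _ hc
        have hcv1 : (c : ℕ) ≠ i := fun hc' => hc.1 (Fin.ext (by simp [hi0, hc']))
        have hcv2 : (c : ℕ) ≠ i + 1 := fun hc' => hc.2 (Fin.ext (by simp [hi1, hc']))
        rcases lt_or_gt_of_ne hcv1 with hlt | hgt
        · have hc2n := c.isLt
          have hJvc := hJv c ⟨2 * n - (c : ℕ), by omega⟩ (by simp; omega)
          rw [hJvc, map_mul]
          have hz : φ (u ⟨2 * n - (c : ℕ), by omega⟩) = 0 := by
            refine IH (c : ℕ) (by omega) _ (by simp; omega) (by simp; omega)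
          rw [hz, mul_zero, mul_zero]
        · have hgt' : (i1 : ℕ) < (c : ℕ) := by simp [hi1]; omega
          rw [hA0 c i1 hgt', zero_mul]
      rw [hA1 i1, one_mul] at heq
      have hz0 : φ (h i0 i1) * φ (J.mulVec u i0) = 0 := by linear_combination heq
      have hne : φ (h i0 i1) ≠ 0 := hAgen i0 i1 (by simp [hi0]; omega) (by simp [hi0, hi1])
      have hz1 : φ (J.mulVec u i0) = 0 := by
        rcases mul_eq_zero.mp hz0 with hc | hc
        · exact absurd hc hne
        · exact hc
      have hJvi := hJv i0 j (by simp [hi0]; omega)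
      rw [hJvi, map_mul] at hz1
      rcases mul_eq_zero.mp hz1 with hc | hc
      · exfalso
        have hmap : φ ((-1 : R) ^ (i0 : ℕ)) = (-1 : _) ^ (i0 : ℕ) := by
          rw [map_pow, map_neg, map_one]
        rw [hmap] at hc
        exact (pow_ne_zero _ (neg_ne_zero.mpr one_ne_zero)) hc
      · exact hc
  -- Claim 2 : φ (u j) = 0 for all j ≥ 1
  have claim2 : ∀ k : ℕ, ∀ j : Fin (2 * n + 1), 2 * n - (j : ℕ) ≤ k → 1 ≤ (j : ℕ) →
      φ (u j) = 0 := by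
    intro k
    induction k using Nat.strong_induction_on with
    | _ k IH =>
      intro j hk hj1
      have hj2n := j.isLt
      by_cases hjn : n < (j : ℕ)
      · exact claim1 k j hk hjn
      push_neg at hjn
      set i0 : Fin (2 * n + 1) := ⟨(j : ℕ) - 1, by omega⟩ with hi0
      have heq := hrow i0
      rw [Finset.sum_eq_add_of_mem i0 j (Finset.mem_univ _) (Finset.mem_univ _)
        (by intro hc; exact absurd (congrArg Fin.val hc) (by simp [hi0]; omega))
        ?side2] at heq
      case side2 =>
        intro c _ hc
        have hcv1 : (c : ℕ) ≠ (j : ℕ) - 1 := fun hc' => hc.1 (Fin.ext (by simp [hi0, hc']))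
        have hcv2 : (c : ℕ) ≠ (j : ℕ) := fun hc' => hc.2 (Fin.ext hc')
        rcases lt_or_gt_of_ne hcv1 with hlt | hgt
        · rw [hA0 i0 c (by simp [hi0]; omega), zero_mul]
        · have hcz : φ (u c) = 0 := by
            refine IH (2 * n - (c : ℕ)) (by omega) c (le_refl _) (by omega)
          rw [hcz, mul_zero]
      rw [hA1 i0, one_mul] at heq
      have hz0 : φ (h i0 j) * φ (u j) = 0 := by linear_combination heq
      have hne : φ (h i0 j) ≠ 0 := hAgen i0 j (by simp [hi0]; omega) (by simp [hi0]; omega)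
      rcases mul_eq_zero.mp hz0 with hc | hc
      · exact absurd hc hne
      · exact hc
  -- u 0 is a unit; normalize
  have hu0 : IsUnit (u 0) := by
    obtain ⟨i, hi⟩ := hexu
    have hiz : i = 0 := by
      by_contra hc
      have h1 : 1 ≤ (i : ℕ) := by
        rcases Nat.eq_zero_or_pos (i : ℕ) with h' | h'
        · exact absurd (Fin.ext h') hc
        · exact h'
      exact hi ((IsLocalRing.residue_eq_zero_iff _).mp (claim2 (2 * n) i (by omega) h1))
    rw [hiz] at hi
    exact IsLocalRing.notMem_maximalIdeal.mp hi
  obtain ⟨c, hc⟩ := hu0.exists_left_inv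
  refine ⟨c • u, ?_, ?_, ?_⟩
  · rw [Matrix.mulVec_smul, heig]
  · simp [hc]
  · intro i hi
    have h1 : 1 ≤ (i : ℕ) := by
      rcases Nat.eq_zero_or_pos (i : ℕ) with h' | h'
      · exact absurd (Fin.ext h') hi
      · exact h'
    have hz : φ (u i) = 0 := claim2 (2 * n) i (by omega) h1
    rw [← IsLocalRing.residue_eq_zero_iff]
    show φ (c * u i) = 0
    rw [map_mul, hz, mul_zero]
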